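/- arXiv:2007.09086 — 2 statements merged into one kernel-verified Lean document; each statement's English description precedes it below -/
import Mathlib

section
/- The standard fundamental sequences on ordinals below ε₀ satisfy the Bachmann property: if α[x] < β < α, then α[x] ≤ β[1]. -/
/-- The predecessor of an ordinal notation: `some β` with `β + 1 = α` if `α` is
a successor, `none` otherwise. -/
def predO : ONote → Option ONote
  | .zero => none
  | .oadd .zero n .zero =>
      some (if h : (n : ℕ) = 1 then .zero
            else .oadd .zero ⟨(n : ℕ) - 1, by have h3 : 0 < (n : ℕ) := n.2; omega⟩ .zero)
  | .oadd _ _ .zero => none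
  | .oadd e n a => (predO a).map (.oadd e n)

/-- The standard fundamental sequences for ordinals below `ε₀` (in Cantor normal
form): `0[x] = 0`, `(β+1)[x] = β`, `(δ + ω^{γ+1})[x] = δ + ω^γ·x` and
`(δ + ω^λ)[x] = δ + ω^{λ[x]}` for limits `λ`. -/
def fundSeq : ONote → ℕ → ONote
  | .zero, _ => .zero
  | .oadd e n (.oadd e' n' a'), x => .oadd e n (fundSeq (.oadd e' n' a') x)
  | .oadd .zero n .zero, _ =>
      if h : (n : ℕ) = 1 then .zero
      else .oadd .zero ⟨(n : ℕ) - 1, by have h3 : 0 < (n : ℕ) := n.2; omega⟩ .zero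
  | .oadd (.oadd f m b) n .zero, x =>
      let tail : ONote :=
        match predO (.oadd f m b) with
        | some e' =>
            if h : x = 0 then .zero
            else .oadd e' ⟨x, Nat.pos_of_ne_zero h⟩ .zero
        | none => .oadd (fundSeq (.oadd f m b) x) 1 .zero
      if h : (n : ℕ) = 1 then tail
      else .oadd (.oadd f m b) ⟨(n : ℕ) - 1, by have h3 : 0 < (n : ℕ) := n.2; omega⟩ tail

open Ordinal

theorem predO_spec : ∀ {e c : ONote}, predO e = some c → e.NF → c.NF ∧ c.repr + 1 = e.repr
  | .zero, c, h, _ => by simp [predO] at h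
  | .oadd .zero n .zero, c, h, hnf => by
      simp only [predO, Option.some.injEq] at h
      subst h
      by_cases hn : (n : ℕ) = 1
      · rw [dif_pos hn]
        refine ⟨ONote.NF.zero, ?_⟩
        simp [hn]
      · rw [dif_neg hn]
        have h3 : 0 < (n : ℕ) := n.2
        refine ⟨ONote.NF.oadd ONote.NF.zero _ ONote.NFBelow.zero, ?_⟩
        simp only [ONote.repr, opow_zero, one_mul, add_zero, PNat.mk_coe]
        rw [← Nat.cast_succ]
        congr 1
        omega
  | .oadd (.oadd f m b) n .zero, c, h, hnf => by simp [predO] at h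
  | .oadd e n (.oadd e2 n2 a2), c, h, hnf => by
      simp only [predO, Option.map_eq_some_iff] at h
      obtain ⟨c', hc', rfl⟩ := h
      obtain ⟨hc'NF, hc'r⟩ := predO_spec hc' hnf.snd
      refine ⟨hnf.fst.oadd _ (ONote.NF.below_of_lt' ?_ hc'NF), ?_⟩
      · calc c'.repr < c'.repr + 1 := lt_add_one _
          _ = (ONote.oadd e2 n2 a2).repr := hc'r
          _ < ω ^ e.repr := hnf.snd'.repr_lt
      · simp only [ONote.repr]
        rw [add_assoc, hc'r]; rfl

theorem fundSeq_of_predO : ∀ {e c : ONote}, predO e = some c → ∀ x, fundSeq e x = c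
  | .zero, c, h, _ => by simp [predO] at h
  | .oadd .zero n .zero, c, h, x => by
      simp only [predO, Option.some.injEq] at h
      subst h; rfl
  | .oadd (.oadd f m b) n .zero, c, h, _ => by simp [predO] at h
  | .oadd e n (.oadd e2 n2 a2), c, h, x => by
      simp only [predO, Option.map_eq_some_iff] at h
      obtain ⟨c', hc', rfl⟩ := h
      have : fundSeq (ONote.oadd e2 n2 a2) x = c' := fundSeq_of_predO hc' x
      have heq : fundSeq (.oadd e n (.oadd e2 n2 a2)) x = .oadd e n (fundSeq (.oadd e2 n2 a2) x) := by
        cases e <;> rfl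
      rw [heq, this]
def powTail (e : ONote) (x : ℕ) : ONote :=
  match predO e with
  | some c =>
      if h : x = 0 then .zero
      else .oadd c ⟨x, Nat.pos_of_ne_zero h⟩ .zero
  | none => .oadd (fundSeq e x) 1 .zero

theorem fundSeq_oadd_zero (f : ONote) (m : ℕ+) (b : ONote) (n : ℕ+) (x : ℕ) :
    fundSeq (.oadd (.oadd f m b) n .zero) x =
      if _ : (n : ℕ) = 1 then powTail (.oadd f m b) x
      else .oadd (.oadd f m b) ⟨(n : ℕ) - 1, by have h3 : 0 < (n : ℕ) := n.2; omega⟩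
        (powTail (.oadd f m b) x) := rfl

theorem fundSeq_nat (m : ℕ+) (x : ℕ) :
    fundSeq (.oadd .zero m .zero) x =
      if _ : (m : ℕ) = 1 then .zero
      else .oadd .zero ⟨(m : ℕ) - 1, by have h3 : 0 < (m : ℕ) := m.2; omega⟩ .zero := rfl

open Ordinal

section helpers
open ONote

theorem opow_mul_le_oadd (e : ONote) (n : ℕ+) (a : ONote) :
    ω ^ e.repr * (n : ℕ) ≤ (ONote.oadd e n a).repr :=
  le_self_add

theorem oadd_repr_lt {e : ONote} {n : ℕ+} {a : ONote} (h : (ONote.oadd e n a).NF) :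
    (ONote.oadd e n a).repr < ω ^ e.repr * ((n : ℕ) + 1) := by
  have hb : a.repr < ω ^ e.repr := h.snd'.repr_lt
  calc (ONote.oadd e n a).repr = ω ^ e.repr * (n : ℕ) + a.repr := rfl
    _ < ω ^ e.repr * (n : ℕ) + ω ^ e.repr := add_lt_add_right hb _
    _ = ω ^ e.repr * ((n : ℕ) + 1) := by rw [mul_add_one]

theorem oadd_lt_opow {e : ONote} {n : ℕ+} {a : ONote} {E : Ordinal}
    (h : (ONote.oadd e n a).NF) (he : e.repr < E) :
    (ONote.oadd e n a).repr < ω ^ E :=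
  (h.below_of_lt he).repr_lt

theorem lead_lt_of_lt_opow {e : ONote} {n : ℕ+} {a : ONote} {E : Ordinal}
    (h : (ONote.oadd e n a).repr < ω ^ E) : e.repr < E := by
  by_contra hle
  push_neg at hle
  exact absurd h (not_lt.2 ((opow_le_opow_right omega0_pos hle).trans (omega0_le_oadd _ _ _)))

theorem le_mul_ord (a : Ordinal) {x : Ordinal} (hx : 1 ≤ x) : a ≤ a * x := by
  conv_lhs => rw [← mul_one a]
  exact mul_le_mul_right hx a

theorem opow_omega_lt_opow {E F : Ordinal} (h : E < F) : ω ^ E < ω ^ F :=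
  (opow_lt_opow_iff_right one_lt_omega0).2 h

end helpers

theorem core_lemma (e : ONote) (he : e.NF) (x : ℕ)
    (IH : ∀ β : ONote, β.NF → (fundSeq e x).repr < β.repr → β.repr < e.repr →
      (fundSeq e x).repr ≤ (fundSeq β 1).repr)
    (β : ONote) (hβ : β.NF)
    (h1 : (powTail e x).repr < β.repr) (h2 : β.repr < ω ^ e.repr) :
    (powTail e x).repr ≤ (fundSeq β 1).repr := by
  cases hp : predO e with
  | some c =>
    obtain ⟨hcNF, hce⟩ := predO_spec hp he
    by_cases hx : x = 0
    · have hT : powTail e x = .zero := by simp [powTail, hp, hx]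
      rw [hT]
      exact zero_le
    · have hT : powTail e x = .oadd c ⟨x, Nat.pos_of_ne_zero hx⟩ .zero := by
        simp [powTail, hp, hx]
      rw [hT] at h1 ⊢
      have hTr : (ONote.oadd c ⟨x, Nat.pos_of_ne_zero hx⟩ ONote.zero).repr
          = ω ^ c.repr * (x : Ordinal) := by
        simp [ONote.repr]
      rw [hTr] at h1 ⊢
      have hx1 : (1 : Ordinal) ≤ (x : Ordinal) := by
        exact_mod_cast Nat.one_le_iff_ne_zero.2 hx
      cases β with
      | zero => exact absurd h1 not_lt_zero
      | oadd e' m b =>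
        -- e'.repr = c.repr
        have h_lt_e : e'.repr < e.repr := lead_lt_of_lt_opow h2
        have h_le : e'.repr ≤ c.repr := by
          rw [← hce] at h_lt_e
          exact Order.lt_add_one_iff.1 h_lt_e
        have h_ge : c.repr ≤ e'.repr := by
          by_contra hlt
          push_neg at hlt
          have h3 : (ONote.oadd e' m b).repr < ω ^ c.repr := oadd_lt_opow hβ hlt
          have h4 : ω ^ c.repr ≤ ω ^ c.repr * (x : Ordinal) := le_mul_ord _ hx1
          exact absurd (h4.trans h1.le) (not_le.2 h3)
        have h_eq : e'.repr = c.repr := le_antisymm h_le h_ge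
        -- x ≤ m
        have hxm : (x : Ordinal) ≤ (m : ℕ) := by
          have hub : (ONote.oadd e' m b).repr < ω ^ c.repr * ((m : ℕ) + 1) := by
            rw [← h_eq]; exact oadd_repr_lt hβ
          have := (mul_lt_mul_iff_right₀ (opow_pos c.repr omega0_pos)).1 (h1.trans hub)
          have hxm' : x ≤ (m : ℕ) := by exact_mod_cast Order.lt_add_one_iff.1 this
          exact_mod_cast hxm'
        cases b with
        | oadd e2 n2 a2 =>
          have hfs : fundSeq (.oadd e' m (.oadd e2 n2 a2)) 1
              = .oadd e' m (fundSeq (.oadd e2 n2 a2) 1) := by cases e' <;> rfl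
          rw [hfs]
          calc ω ^ c.repr * (x : Ordinal) ≤ ω ^ e'.repr * (m : ℕ) := by
                rw [h_eq]; exact mul_le_mul_right hxm _
            _ ≤ _ := opow_mul_le_oadd _ _ _
        | zero =>
          -- β = ω^e' * m, so x < m
          have hxm2 : x < (m : ℕ) := by
            have : ω ^ c.repr * (x : Ordinal) < ω ^ c.repr * (m : ℕ) := by
              calc ω ^ c.repr * (x : Ordinal) < (ONote.oadd e' m ONote.zero).repr := h1
                _ = ω ^ c.repr * (m : ℕ) := by rw [← h_eq]; simp [ONote.repr]
            have := (mul_lt_mul_iff_right₀ (opow_pos c.repr omega0_pos)).1 this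
            exact_mod_cast this
          have hm1 : (m : ℕ) ≠ 1 := by
            have hx1' : 1 ≤ x := Nat.one_le_iff_ne_zero.2 hx
            omega
          cases e' with
          | zero =>
            have hc0 : c.repr = 0 := by simpa [ONote.repr] using h_eq.symm
            rw [fundSeq_nat, dif_neg hm1, hc0]
            have : (x : Ordinal) ≤ ((m : ℕ) - 1 : ℕ) := by
              have : x ≤ (m : ℕ) - 1 := by omega
              exact_mod_cast this
            simpa [ONote.repr] using this
          | oadd f2 m2 b2 =>
            rw [fundSeq_oadd_zero, dif_neg hm1]
            calc ω ^ c.repr * (x : Ordinal)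
                ≤ ω ^ c.repr * (((m : ℕ) - 1 : ℕ) : Ordinal) := by
                  apply mul_le_mul_right
                  exact_mod_cast (by omega : x ≤ (m : ℕ) - 1)
              _ = ω ^ (ONote.oadd f2 m2 b2).repr * (((m : ℕ) - 1 : ℕ) : Ordinal) := by
                  rw [h_eq]
              _ ≤ _ := by
                  exact le_self_add
  | none =>
    have hT : powTail e x = .oadd (fundSeq e x) 1 .zero := by simp [powTail, hp]
    rw [hT] at h1 ⊢
    set t := (fundSeq e x).repr with ht
    have hTr : (ONote.oadd (fundSeq e x) 1 ONote.zero).repr = ω ^ t := by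
      simp [ONote.repr]; rfl
    rw [hTr] at h1 ⊢
    cases β with
    | zero => exact absurd h1 not_lt_zero
    | oadd e' m b =>
      have h_lt_e : e'.repr < e.repr := lead_lt_of_lt_opow h2
      have h_ge : t ≤ e'.repr := by
        by_contra hlt
        push_neg at hlt
        exact absurd (oadd_lt_opow hβ hlt) (not_lt.2 h1.le)
      have hm1 : (1 : Ordinal) ≤ (m : ℕ) := by exact_mod_cast m.2
      rcases eq_or_lt_of_le h_ge with h_eq | h_lt
      · -- t = e'.repr
        cases b with
        | oadd e2 n2 a2 =>
          have hfs : fundSeq (.oadd e' m (.oadd e2 n2 a2)) 1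
              = .oadd e' m (fundSeq (.oadd e2 n2 a2) 1) := by cases e' <;> rfl
          rw [hfs]
          calc ω ^ t ≤ ω ^ e'.repr * (m : ℕ) := by
                rw [← h_eq]; exact le_mul_ord _ hm1
            _ ≤ _ := opow_mul_le_oadd _ _ _
        | zero =>
          have hm2 : 1 < (m : ℕ) := by
            by_contra hc
            have hm1' : (m : ℕ) = 1 := by have := m.pos; omega
            have : (ONote.oadd e' m ONote.zero).repr = ω ^ t := by
              simp [ONote.repr, hm1', ← h_eq]
            rw [this] at h1
            exact lt_irrefl _ h1
          have hmne : (m : ℕ) ≠ 1 := by omega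
          cases e' with
          | zero =>
            have ht0 : t = 0 := by simpa [ONote.repr] using h_eq
            rw [fundSeq_nat, dif_neg hmne, ht0]
            have : (1 : Ordinal) ≤ (((m : ℕ) - 1 : ℕ) : Ordinal) := by
              exact_mod_cast (by omega : 1 ≤ (m : ℕ) - 1)
            simpa [ONote.repr] using this
          | oadd f2 m2 b2 =>
            rw [fundSeq_oadd_zero, dif_neg hmne]
            calc ω ^ t = ω ^ (ONote.oadd f2 m2 b2).repr * 1 := by rw [← h_eq, mul_one]
              _ ≤ ω ^ (ONote.oadd f2 m2 b2).repr * (((m : ℕ) - 1 : ℕ) : Ordinal) := by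
                  apply mul_le_mul_right
                  exact_mod_cast (by omega : 1 ≤ (m : ℕ) - 1)
              _ ≤ _ := le_self_add
      · -- t < e'.repr : need IH in the m = 1, b = 0 case
        have hIH := IH e' hβ.fst h_lt h_lt_e
        have hωle : ω ^ t ≤ ω ^ e'.repr := (opow_omega_lt_opow h_lt).le
        cases b with
        | oadd e2 n2 a2 =>
          have hfs : fundSeq (.oadd e' m (.oadd e2 n2 a2)) 1
              = .oadd e' m (fundSeq (.oadd e2 n2 a2) 1) := by cases e' <;> rfl
          rw [hfs]
          calc ω ^ t ≤ ω ^ e'.repr := hωle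
            _ ≤ ω ^ e'.repr * (m : ℕ) := le_mul_ord _ hm1
            _ ≤ _ := opow_mul_le_oadd _ _ _
        | zero =>
          cases e' with
          | zero =>
            exact absurd h_lt (by simp [ONote.repr])
          | oadd f2 m2 b2 =>
            by_cases hm : (m : ℕ) = 1
            · rw [fundSeq_oadd_zero, dif_pos hm]
              cases hp' : predO (.oadd f2 m2 b2) with
              | some c' =>
                have hfc : fundSeq (.oadd f2 m2 b2) 1 = c' := fundSeq_of_predO hp' 1
                have hT' : powTail (.oadd f2 m2 b2) 1
                    = .oadd c' ⟨1, one_pos⟩ .zero := by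
                  simp [powTail, hp']
                rw [hT']
                rw [hfc] at hIH
                calc ω ^ t ≤ ω ^ c'.repr := opow_le_opow_right omega0_pos hIH
                  _ ≤ _ := by simp [ONote.repr]
              | none =>
                have hT' : powTail (.oadd f2 m2 b2) 1
                    = .oadd (fundSeq (.oadd f2 m2 b2) 1) 1 .zero := by
                  simp [powTail, hp']
                rw [hT']
                calc ω ^ t ≤ ω ^ (fundSeq (.oadd f2 m2 b2) 1).repr :=
                      opow_le_opow_right omega0_pos hIH
                  _ ≤ _ := by simp [ONote.repr]
            · rw [fundSeq_oadd_zero, dif_neg hm]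
              calc ω ^ t ≤ ω ^ (ONote.oadd f2 m2 b2).repr := hωle
                _ ≤ ω ^ (ONote.oadd f2 m2 b2).repr * (((m : ℕ) - 1 : ℕ) : Ordinal) := by
                    apply le_mul_ord
                    exact_mod_cast (by have := m.pos; omega : 1 ≤ (m : ℕ) - 1)
                _ ≤ _ := le_self_add

/-- The Bachmann property of the standard fundamental sequences below `ε₀`:
if `α[x] < β < α` then `α[x] ≤ β[1]`. -/
theorem bachmann_property (α β : ONote) (hα : α.NF) (hβ : β.NF) (x : ℕ)
    (h1 : (fundSeq α x).repr < β.repr) (h2 : β.repr < α.repr) :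
    (fundSeq α x).repr ≤ (fundSeq β 1).repr := by
  induction α generalizing β with
  | zero => exact absurd h2 not_lt_zero
  | oadd e n a IHe IHa =>
    cases a with
    | oadd e2 n2 a2 =>
      have hfs : fundSeq (.oadd e n (.oadd e2 n2 a2)) x
          = .oadd e n (fundSeq (.oadd e2 n2 a2) x) := by cases e <;> rfl
      rw [hfs] at h1 ⊢
      cases β with
      | zero => exact absurd h1 not_lt_zero
      | oadd e' m b =>
        have hae : (ONote.oadd e2 n2 a2).repr < ω ^ e.repr := hα.snd'.repr_lt
        -- e'.repr = e.repr
        have hE_ge : e.repr ≤ e'.repr := by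
          by_contra hlt
          push_neg at hlt
          have hb : (ONote.oadd e' m b).repr < ω ^ e.repr := oadd_lt_opow hβ hlt
          have hlow : ω ^ e.repr ≤ (ONote.oadd e n (fundSeq (.oadd e2 n2 a2) x)).repr :=
            ONote.omega0_le_oadd _ _ _
          exact absurd (hb.trans_le (hlow.trans h1.le)) (lt_irrefl _)
        have hE_le : e'.repr ≤ e.repr := by
          by_contra hlt
          push_neg at hlt
          have hup : (ONote.oadd e n (ONote.oadd e2 n2 a2)).repr < ω ^ (e.repr + 1) :=
            oadd_lt_opow hα (lt_add_one _)
          have h3 : ω ^ (e.repr + 1) ≤ ω ^ e'.repr :=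
            opow_le_opow_right omega0_pos (Order.add_one_le_iff.2 hlt)
          have h4 := (h2.trans hup).trans_le (h3.trans (ONote.omega0_le_oadd e' m b))
          exact absurd h4 (lt_irrefl _)
        have hE : e'.repr = e.repr := le_antisymm hE_le hE_ge
        -- m = n
        have hmn : (m : ℕ) = (n : ℕ) := by
          have hpos : (0 : Ordinal) < ω ^ e.repr := opow_pos _ omega0_pos
          have hn_le : ((n : ℕ) : Ordinal) < (m : ℕ) + 1 := by
            have l1 : ω ^ e.repr * (n : ℕ)
                ≤ (ONote.oadd e n (fundSeq (.oadd e2 n2 a2) x)).repr := le_self_add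
            have l2 : (ONote.oadd e' m b).repr < ω ^ e.repr * ((m : ℕ) + 1) := by
              rw [← hE]; exact oadd_repr_lt hβ
            exact (mul_lt_mul_iff_right₀ hpos).1 ((l1.trans_lt h1).trans l2)
          have hm_le : ((m : ℕ) : Ordinal) < (n : ℕ) + 1 := by
            have l1 : ω ^ e.repr * (m : ℕ) ≤ (ONote.oadd e' m b).repr := by
              rw [← hE]; exact le_self_add
            have l2 : (ONote.oadd e n (ONote.oadd e2 n2 a2)).repr
                < ω ^ e.repr * ((n : ℕ) + 1) := oadd_repr_lt hα
            exact (mul_lt_mul_iff_right₀ hpos).1 ((l1.trans_lt h2).trans l2)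
          have c1 : (n : ℕ) < (m : ℕ) + 1 := by exact_mod_cast hn_le
          have c2 : (m : ℕ) < (n : ℕ) + 1 := by exact_mod_cast hm_le
          omega
        -- tail bounds
        have hbrepr : (ONote.oadd e' m b).repr
            = ω ^ e.repr * (n : ℕ) + b.repr := by
          show ω ^ e'.repr * (m : ℕ) + b.repr = _
          rw [hE, hmn]
        have hb1 : (fundSeq (.oadd e2 n2 a2) x).repr < b.repr := by
          have := h1
          rw [hbrepr] at this
          exact (add_lt_add_iff_left _).1 this
        have hb2 : b.repr < (ONote.oadd e2 n2 a2).repr := by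
          have := h2
          rw [hbrepr] at this
          exact (add_lt_add_iff_left _).1 this
        have key := IHa b hα.snd hβ.snd hb1 hb2
        cases b with
        | zero => exact absurd hb1 (by simp [ONote.repr])
        | oadd e3 n3 a3 =>
          have hfs2 : fundSeq (.oadd e' m (.oadd e3 n3 a3)) 1
              = .oadd e' m (fundSeq (.oadd e3 n3 a3) 1) := by cases e' <;> rfl
          rw [hfs2]
          show ω ^ e.repr * (n : ℕ) + (fundSeq (.oadd e2 n2 a2) x).repr
            ≤ ω ^ e'.repr * (m : ℕ) + (fundSeq (.oadd e3 n3 a3) 1).repr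
          rw [hE, hmn]
          exact add_le_add_right key _
    | zero =>
      cases e with
      | zero =>
        exfalso
        have hβn : β.repr < ((n : ℕ) : Ordinal) := by
          have : (ONote.oadd .zero n .zero).repr = ((n : ℕ) : Ordinal) := by
            simp [ONote.repr]
          rwa [this] at h2
        have hfsr : (fundSeq (.oadd .zero n .zero) x).repr = (((n : ℕ) - 1 : ℕ) : Ordinal) := by
          rw [fundSeq_nat]
          by_cases hn : (n : ℕ) = 1
          · rw [dif_pos hn]; simp [hn]
          · rw [dif_neg hn]; simp [ONote.repr]
        rw [hfsr] at h1
        have hsplit : ((n : ℕ) : Ordinal) = (((n : ℕ) - 1 : ℕ) : Ordinal) + 1 := by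
          have hp := n.pos
          have h5 : (n : ℕ) = (n : ℕ) - 1 + 1 := by omega
          exact_mod_cast h5
        rw [hsplit] at hβn
        exact absurd (h1.trans_le (Order.lt_add_one_iff.1 hβn)) (lt_irrefl _)
      | oadd f m' b' =>
        rw [fundSeq_oadd_zero] at h1 ⊢
        by_cases hn : (n : ℕ) = 1
        · rw [dif_pos hn] at h1 ⊢
          have h2' : β.repr < ω ^ (ONote.oadd f m' b').repr := by
            have : (ONote.oadd (.oadd f m' b') n .zero).repr
                = ω ^ (ONote.oadd f m' b').repr := by
              simp [ONote.repr, hn]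
            rwa [this] at h2
          exact core_lemma _ hα.fst x (fun γ hγ => IHe γ hα.fst hγ) β hβ h1 h2'
        · rw [dif_neg hn] at h1 ⊢
          have hn2 : 1 ≤ (n : ℕ) - 1 := by have := n.pos; omega
          have hT1 : ((((n : ℕ) - 1 : ℕ)) : Ordinal) ≥ 1 := by exact_mod_cast hn2
          have hr1 : (ONote.oadd (.oadd f m' b')
              ⟨(n : ℕ) - 1, by have h3 : 0 < (n : ℕ) := n.2; omega⟩
              (powTail (.oadd f m' b') x)).repr
              = ω ^ (ONote.oadd f m' b').repr * (((n : ℕ) - 1 : ℕ) : Ordinal)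
                + (powTail (.oadd f m' b') x).repr := by
            simp [ONote.repr]
          rw [hr1] at h1 ⊢
          cases β with
          | zero => exact absurd h1 not_lt_zero
          | oadd e' m b =>
            have hpos : (0 : Ordinal) < ω ^ (ONote.oadd f m' b').repr :=
              opow_pos _ omega0_pos
            have hE_ge : (ONote.oadd f m' b').repr ≤ e'.repr := by
              by_contra hlt
              push_neg at hlt
              have hb : (ONote.oadd e' m b).repr < ω ^ (ONote.oadd f m' b').repr :=
                oadd_lt_opow hβ hlt
              have hlow : ω ^ (ONote.oadd f m' b').repr
                  ≤ ω ^ (ONote.oadd f m' b').repr * (((n : ℕ) - 1 : ℕ) : Ordinal)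
                    + (powTail (.oadd f m' b') x).repr :=
                (le_mul_ord _ hT1).trans (le_self_add)
              exact absurd (hb.trans_le (hlow.trans h1.le)) (lt_irrefl _)
            have hE_le : e'.repr ≤ (ONote.oadd f m' b').repr := by
              by_contra hlt
              push_neg at hlt
              have hup : (ONote.oadd (.oadd f m' b') n .zero).repr
                  < ω ^ ((ONote.oadd f m' b').repr + 1) :=
                oadd_lt_opow hα (lt_add_one _)
              have h3 : ω ^ ((ONote.oadd f m' b').repr + 1) ≤ ω ^ e'.repr :=
                opow_le_opow_right omega0_pos (Order.add_one_le_iff.2 hlt)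
              exact absurd ((h2.trans hup).trans_le
                (h3.trans (ONote.omega0_le_oadd e' m b))) (lt_irrefl _)
            have hE : e'.repr = (ONote.oadd f m' b').repr := le_antisymm hE_le hE_ge
            have hmn : (m : ℕ) = (n : ℕ) - 1 := by
              have hn_le : ((((n : ℕ) - 1 : ℕ)) : Ordinal) < (m : ℕ) + 1 := by
                have l1 : ω ^ (ONote.oadd f m' b').repr * (((n : ℕ) - 1 : ℕ) : Ordinal)
                    ≤ ω ^ (ONote.oadd f m' b').repr * (((n : ℕ) - 1 : ℕ) : Ordinal)
                      + (powTail (.oadd f m' b') x).repr := le_self_add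
                have l2 : (ONote.oadd e' m b).repr
                    < ω ^ (ONote.oadd f m' b').repr * ((m : ℕ) + 1) := by
                  rw [← hE]; exact oadd_repr_lt hβ
                exact (mul_lt_mul_iff_right₀ hpos).1 ((l1.trans_lt h1).trans l2)
              have hm_le : ((m : ℕ) : Ordinal) < (n : ℕ) := by
                have l1 : ω ^ (ONote.oadd f m' b').repr * (m : ℕ)
                    ≤ (ONote.oadd e' m b).repr := by
                  rw [← hE]; exact le_self_add
                have l2 : (ONote.oadd (.oadd f m' b') n .zero).repr
                    = ω ^ (ONote.oadd f m' b').repr * (n : ℕ) := by simp [ONote.repr]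
                rw [l2] at h2
                exact (mul_lt_mul_iff_right₀ hpos).1 (l1.trans_lt h2)
              have c1 : (n : ℕ) - 1 < (m : ℕ) + 1 := by exact_mod_cast hn_le
              have c2 : (m : ℕ) < (n : ℕ) := by exact_mod_cast hm_le
              omega
            have hbrepr : (ONote.oadd e' m b).repr
                = ω ^ (ONote.oadd f m' b').repr * (((n : ℕ) - 1 : ℕ) : Ordinal) + b.repr := by
              show ω ^ e'.repr * (m : ℕ) + b.repr = _
              rw [hE, hmn]
            have hb1 : (powTail (.oadd f m' b') x).repr < b.repr := by
              have := h1
              rw [hbrepr] at this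
              exact (add_lt_add_iff_left _).1 this
            have hb2 : b.repr < ω ^ (ONote.oadd f m' b').repr := by
              have := hβ.snd'.repr_lt
              rwa [hE] at this
            have key := core_lemma _ hα.fst x (fun γ hγ => IHe γ hα.fst hγ) b hβ.snd hb1 hb2
            cases b with
            | zero => exact absurd hb1 (by simp [ONote.repr])
            | oadd e3 n3 a3 =>
              have hfs2 : fundSeq (.oadd e' m (.oadd e3 n3 a3)) 1
                  = .oadd e' m (fundSeq (.oadd e3 n3 a3) 1) := by cases e' <;> rfl
              rw [hfs2]
              show _ ≤ ω ^ e'.repr * (m : ℕ) + (fundSeq (.oadd e3 n3 a3) 1).repr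
              rw [hE, hmn]
              exact add_le_add_right key _
end

section
/- If α < β are ordinals below ε₀, then either β = α+1, or α < β[1], or there exist a Cantor-normal-form context λ[[·]] (an ordinal expression with one placeholder), an ordinal γ, and a natural number r such that α = λ[[ω^γ·r]] and β = λ*[[ω^{γ+1}]], where λ* is the truncation of λ (hereditarily deleting all terms after the placeholder); moreover in this case α < λ*[[ω^γ·(r+1)]]. -/
/-- An ordinal context with exactly one placeholder: either the placeholder is a
summand (with the summands before and after it), or it occurs inside the
exponent of a summand. -/
inductive Ctx : Type 1
  | atHole (pre post : Ordinal)
  | inExp (pre : Ordinal) (c : Ctx) (post : Ordinal)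

/-- Substitution of an ordinal into the placeholder of a context. -/
noncomputable def Ctx.subst : Ctx → Ordinal → Ordinal
  | .atHole p q, x => p + x + q
  | .inExp p c q, x => p + Ordinal.omega0 ^ (Ctx.subst c x) + q

/-- The truncation `λ*` of a context `λ`: hereditarily delete all summands
occurring after the placeholder. -/
def Ctx.trunc : Ctx → Ctx
  | .atHole p _ => .atHole p 0
  | .inExp p c _ => .inExp p c.trunc 0

open Ordinal ONote

lemma repr_oadd' (e : ONote) (n : ℕ+) (a : ONote) :
    (ONote.oadd e n a).repr = ω ^ e.repr * ((n : ℕ) : Ordinal) + a.repr := rfl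

lemma repr_oadd_pos (e : ONote) (n : ℕ+) (a : ONote) : 0 < (ONote.oadd e n a).repr := by
  rw [repr_oadd']
  have h1 : (0:Ordinal) < ω ^ e.repr * ((n : ℕ) : Ordinal) :=
    mul_pos (opow_pos _ omega0_pos) (by exact_mod_cast n.pos)
  exact h1.trans_le (le_self_add)

lemma predO_some_repr : ∀ e : ONote, e.NF → ∀ e', predO e = some e' → e.repr = e'.repr + 1 := by
  intro e
  induction e with
  | zero => intro _ e' h; simp [predO] at h
  | oadd f m a IHf IHa =>
    intro he e' h
    cases a with
    | zero =>
      cases f with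
      | zero =>
        simp only [predO] at h
        by_cases hm : (m : ℕ) = 1
        · simp [hm] at h; subst h; simp [repr_oadd', hm]
        · simp [hm] at h; subst h
          have h1 : ((m : ℕ) - 1 : ℕ) + 1 = (m : ℕ) := Nat.succ_pred_eq_of_pos m.2
          rw [repr_oadd']; erw [repr_oadd']
          simp only [opow_zero, one_mul, add_zero, ONote.repr, PNat.mk_coe]
          rw [← h1]; push_cast; ring
      | oadd f1 m1 a1 => simp [predO] at h
    | oadd f' m' a' =>
      simp only [predO, Option.map_eq_some_iff] at h
      obtain ⟨x, hx, rfl⟩ := h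
      have hthis := IHa he.snd x hx
      simp only [repr_oadd'] at hthis ⊢
      rw [hthis, ← add_assoc]

lemma predO_none_limit : ∀ e : ONote, e.NF → predO e = none → e ≠ 0 → Order.IsSuccLimit (e.repr) := by
  intro e
  induction e with
  | zero => intro _ _ h; exact absurd rfl h
  | oadd f m a IHf IHa =>
    intro he h _
    cases a with
    | zero =>
      cases f with
      | zero => simp [predO] at h
      | oadd f1 m1 a1 =>
        have hf : (ONote.oadd f1 m1 a1).repr ≠ 0 := (repr_oadd_pos f1 m1 a1).ne'
        rw [repr_oadd', ONote.repr, add_zero]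
        exact isSuccLimit_mul_left (isSuccLimit_opow_left isSuccLimit_omega0 hf)
          (by exact_mod_cast m.pos)
    | oadd f' m' a' =>
      have ha : predO (ONote.oadd f' m' a') = none := by
        simp only [predO, Option.map_eq_none_iff] at h ⊢; exact h
      have hlim := IHa he.snd ha (by intro hc; cases hc)
      rw [repr_oadd']
      exact isSuccLimit_add _ hlim

/-- Adding a fixed ordinal before a context. -/
def Ctx.prepend (d : Ordinal) : Ctx → Ctx
  | .atHole p q => .atHole (d + p) q
  | .inExp p c q => .inExp (d + p) c q

lemma Ctx.prepend_subst (d : Ordinal) (c : Ctx) (x : Ordinal) :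
    (c.prepend d).subst x = d + c.subst x := by
  cases c <;> simp [Ctx.prepend, Ctx.subst, add_assoc]

lemma Ctx.prepend_trunc (d : Ordinal) (c : Ctx) :
    (c.prepend d).trunc = c.trunc.prepend d := by
  cases c <;> simp [Ctx.prepend, Ctx.trunc]

lemma exists_nat_near (δ γ : Ordinal) (hδ : δ < ω ^ (γ + 1)) :
    ∃ r : ℕ, ω ^ γ * r ≤ δ ∧ δ < ω ^ γ * ((r : Ordinal) + 1) := by
  have h0 : ω ^ γ ≠ 0 := (opow_pos γ omega0_pos).ne'
  have hdiv : δ / ω ^ γ < ω := by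
    rw [Ordinal.div_lt h0]
    rwa [add_one_eq_succ, opow_succ] at hδ
  obtain ⟨r, hr⟩ := lt_omega0.1 hdiv
  refine ⟨r, ?_, ?_⟩
  · calc ω ^ γ * r = ω ^ γ * (δ / ω ^ γ) := by rw [hr]
      _ ≤ δ := mul_div_le δ (ω ^ γ)
  · have h2 := lt_mul_succ_div δ h0
    rwa [hr, ← add_one_eq_succ] at h2

/-- The disjunctive conclusion of the main theorem. -/
def Goal (a b : ONote) : Prop :=
  b.repr = a.repr + 1 ∨ a.repr < (fundSeq b 1).repr ∨
    ∃ (c : Ctx) (γ : Ordinal) (r : ℕ),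
      a.repr = c.subst (Ordinal.omega0 ^ γ * r) ∧
      b.repr = c.trunc.subst (Ordinal.omega0 ^ (γ + 1)) ∧
      a.repr < c.trunc.subst (Ordinal.omega0 ^ γ * (r + 1))

/-- Core construction for the limit-exponent case: `α = p + repr d`,
`β = p + ω ^ repr e`, `b[1] = p + ω ^ repr (e[1])`. -/
lemma core_limit (e f : ONote) (m : ℕ+) (ρ : ONote)
    (hdNF : (ONote.oadd f m ρ).NF) (hlim : Order.IsSuccLimit (ONote.repr e))
    (p : Ordinal) (IH : Goal f e) :
    p + (ONote.oadd f m ρ).repr < p + ω ^ (fundSeq e 1).repr ∨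
    ∃ (c : Ctx) (γ : Ordinal) (r : ℕ),
      p + (ONote.oadd f m ρ).repr = c.subst (Ordinal.omega0 ^ γ * r) ∧
      p + ω ^ e.repr = c.trunc.subst (Ordinal.omega0 ^ (γ + 1)) ∧
      p + (ONote.oadd f m ρ).repr < c.trunc.subst (Ordinal.omega0 ^ γ * (r + 1)) := by
  rcases IH with h | h | ⟨c, γ, r, h1, h2, h3⟩
  · exfalso
    have hlt : f.repr < e.repr := by
      rw [h]; exact lt_add_one _
    have := hlim.succ_lt hlt
    rw [← add_one_eq_succ, ← h] at this
    exact absurd this (lt_irrefl _)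
  · left
    have := (ONote.NF.below_of_lt h hdNF).repr_lt
    exact add_lt_add_right this p
  · right
    have hle : ω ^ f.repr ≤ (ONote.oadd f m ρ).repr := by
      rw [repr_oadd']
      calc ω ^ f.repr = ω ^ f.repr * 1 := (mul_one _).symm
        _ ≤ ω ^ f.repr * ((m : ℕ) : Ordinal) := by
            apply mul_le_mul_right
            exact_mod_cast m.one_le
        _ ≤ _ := le_self_add
    refine ⟨.inExp p c ((ONote.oadd f m ρ).repr - ω ^ f.repr), γ, r, ?_, ?_, ?_⟩
    · show p + (ONote.oadd f m ρ).repr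
        = p + ω ^ (c.subst (ω ^ γ * r)) + ((ONote.oadd f m ρ).repr - ω ^ f.repr)
      rw [← h1, add_assoc, Ordinal.add_sub_cancel_of_le hle]
    · show p + ω ^ e.repr = p + ω ^ (c.trunc.subst (ω ^ (γ + 1))) + 0
      rw [← h2, add_zero]
    · show p + (ONote.oadd f m ρ).repr
        < p + ω ^ (c.trunc.subst (ω ^ γ * ((r : Ordinal) + 1))) + 0
      rw [add_zero]
      apply add_lt_add_right
      exact (ONote.NF.below_of_lt h3 hdNF).repr_lt

lemma fundSeq_some (f : ONote) (m : ℕ+) (b0 : ONote) (n : ℕ+) (e' : ONote)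
    (h : predO (.oadd f m b0) = some e') :
    fundSeq (.oadd (.oadd f m b0) n .zero) 1 =
    if hn : (n:ℕ) = 1 then .oadd e' 1 .zero
    else .oadd (.oadd f m b0) ⟨(n:ℕ)-1, by have h3 : 0 < (n : ℕ) := n.2; omega⟩
      (.oadd e' 1 .zero) := by
  simp [fundSeq, h]

lemma fundSeq_none (f : ONote) (m : ℕ+) (b0 : ONote) (n : ℕ+)
    (h : predO (.oadd f m b0) = none) :
    fundSeq (.oadd (.oadd f m b0) n .zero) 1 =
    if hn : (n:ℕ) = 1 then .oadd (fundSeq (.oadd f m b0) 1) 1 .zero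
    else .oadd (.oadd f m b0) ⟨(n:ℕ)-1, by have h3 : 0 < (n : ℕ) := n.2; omega⟩
      (.oadd (fundSeq (.oadd f m b0) 1) 1 .zero) := by
  simp [fundSeq, h]

lemma aux_main : ∀ (b a : ONote), a.NF → b.NF → a.repr < b.repr → Goal a b := by
  intro b
  induction b with
  | zero => intro a _ _ hab; exact absurd hab (not_lt_zero' (a := a.repr))
  | oadd e n b' IHe IHb' =>
    intro a ha hb hab
    cases b' with
    | oadd e2 n2 a2 =>
      -- b = oadd e n (oadd e2 n2 a2) : nonzero tail
      have hfs : fundSeq (ONote.oadd e n (ONote.oadd e2 n2 a2)) 1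
          = ONote.oadd e n (fundSeq (ONote.oadd e2 n2 a2) 1) := by
        simp [fundSeq]
      have hb'lt : (ONote.oadd e2 n2 a2).repr < ω ^ e.repr := hb.snd'.repr_lt
      cases a with
      | zero =>
        right; left
        rw [hfs]
        exact repr_oadd_pos _ _ _
      | oadd ea na a0 =>
        rcases lt_trichotomy ea.repr e.repr with hE | hE | hE
        · right; left
          rw [hfs, repr_oadd']
          have h1 : (ONote.oadd ea na a0).repr < ω ^ e.repr :=
            (ONote.NF.below_of_lt hE ha).repr_lt
          have h2 : ω ^ e.repr ≤ ω ^ e.repr * ((n : ℕ) : Ordinal) := by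
            calc ω ^ e.repr = ω ^ e.repr * 1 := (mul_one _).symm
              _ ≤ _ := by apply mul_le_mul_right; exact_mod_cast n.one_le
          exact h1.trans_le (h2.trans (le_self_add))
        · rcases lt_trichotomy (na : ℕ) (n : ℕ) with hN | hN | hN
          · right; left
            rw [hfs, repr_oadd', repr_oadd']
            have hρ : a0.repr < ω ^ ea.repr := ha.snd'.repr_lt
            calc ω ^ ea.repr * ((na : ℕ) : Ordinal) + a0.repr
                < ω ^ ea.repr * ((na : ℕ) : Ordinal) + ω ^ ea.repr := add_lt_add_right hρ _
              _ = ω ^ ea.repr * (((na : ℕ) : Ordinal) + 1) := by rw [mul_add, mul_one]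
              _ ≤ ω ^ e.repr * ((n : ℕ) : Ordinal) := by
                  rw [hE]; apply mul_le_mul_right
                  have : ((na : ℕ) + 1 : ℕ) ≤ (n : ℕ) := hN
                  exact_mod_cast this
              _ ≤ _ := le_self_add
          · -- equal leading terms: recurse on the tails
            have hNo : ((na : ℕ) : Ordinal) = ((n : ℕ) : Ordinal) := by exact_mod_cast hN
            have hcan : a0.repr < (ONote.oadd e2 n2 a2).repr := by
              rw [repr_oadd', repr_oadd', hE, hNo] at hab
              exact lt_of_add_lt_add_left hab
            have hα : (ONote.oadd ea na a0).repr
                = ω ^ e.repr * ((n : ℕ) : Ordinal) + a0.repr := by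
              rw [repr_oadd', hE, hNo]
            rcases IHb' a0 ha.snd hb.snd hcan with h | h | ⟨c, γ, r, h1, h2, h3⟩
            · left
              rw [repr_oadd', hα, h, ← add_assoc]
            · right; left
              rw [hfs, hα, repr_oadd' e n]
              exact add_lt_add_right h _
            · right; right
              refine ⟨c.prepend (ω ^ e.repr * ((n : ℕ) : Ordinal)), γ, r, ?_, ?_, ?_⟩
              · rw [Ctx.prepend_subst, hα, h1]
              · rw [Ctx.prepend_trunc, Ctx.prepend_subst, repr_oadd', h2]
              · rw [Ctx.prepend_trunc, Ctx.prepend_subst, hα]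
                exact add_lt_add_right h3 _
          · exfalso
            have h1 : (ONote.oadd e n (ONote.oadd e2 n2 a2)).repr
                ≤ (ONote.oadd ea na a0).repr := by
              rw [repr_oadd' e n, repr_oadd' ea na, hE]
              calc ω ^ e.repr * ((n : ℕ) : Ordinal) + (ONote.oadd e2 n2 a2).repr
                  ≤ ω ^ e.repr * ((n : ℕ) : Ordinal) + ω ^ e.repr := le_of_lt (add_lt_add_right hb'lt _)
                _ = ω ^ e.repr * (((n : ℕ) : Ordinal) + 1) := by rw [mul_add, mul_one]
                _ ≤ ω ^ e.repr * ((na : ℕ) : Ordinal) := by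
                    apply mul_le_mul_right
                    have : ((n : ℕ) + 1 : ℕ) ≤ (na : ℕ) := hN
                    exact_mod_cast this
                _ ≤ _ := le_self_add
            exact absurd hab (not_lt_of_ge h1)
        · exfalso
          have h1 : (ONote.oadd e n (ONote.oadd e2 n2 a2)).repr
              ≤ (ONote.oadd ea na a0).repr := by
            have h2 : (ONote.oadd e n (ONote.oadd e2 n2 a2)).repr < ω ^ ea.repr :=
              (ONote.NF.below_of_lt hE hb).repr_lt
            refine le_trans (le_of_lt h2) ?_
            rw [repr_oadd']
            calc ω ^ ea.repr = ω ^ ea.repr * 1 := (mul_one _).symm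
              _ ≤ ω ^ ea.repr * ((na : ℕ) : Ordinal) := by
                  apply mul_le_mul_right; exact_mod_cast na.one_le
              _ ≤ _ := le_self_add
          exact absurd hab (not_lt_of_ge h1)
    | zero =>
      -- b = oadd e n zero
      cases e with
      | zero =>
        have hβ : (ONote.oadd ONote.zero n ONote.zero).repr = ((n:ℕ) : Ordinal) := by
          rw [repr_oadd']; simp [ONote.repr]
        by_cases hn : (n:ℕ) = 1
        · left
          have h0 : a.repr = 0 := by
            rw [hβ, hn] at hab
            exact Ordinal.lt_one_iff_zero.1 (by exact_mod_cast hab)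
          rw [hβ, hn, h0]
          norm_num
        · have hfs : (fundSeq (ONote.oadd ONote.zero n ONote.zero) 1).repr
              = (((n:ℕ) - 1 : ℕ) : Ordinal) := by
            simp only [fundSeq, dif_neg hn]
            erw [repr_oadd']; simp [ONote.repr]
          have hko : ((n:ℕ) : Ordinal) = (((n:ℕ)-1 : ℕ) : Ordinal) + 1 := by
            have h1 : ((n:ℕ) - 1) + 1 = (n:ℕ) := Nat.succ_pred_eq_of_pos n.2
            rw [← h1]; push_cast; ring
          rw [hβ, hko, add_one_eq_succ, Order.lt_succ_iff] at hab
          rcases lt_or_eq_of_le hab with h | h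
          · right; left; rw [hfs]; exact h
          · left; rw [hβ, hko, h]
      | oadd f m b0 =>
        have hko : ((n:ℕ) : Ordinal) = (((n:ℕ)-1 : ℕ) : Ordinal) + 1 := by
          have h1 : ((n:ℕ) - 1) + 1 = (n:ℕ) := Nat.succ_pred_eq_of_pos n.2
          rw [← h1]; push_cast; ring
        have hβ : (ONote.oadd (ONote.oadd f m b0) n ONote.zero).repr = (ω ^ (ONote.oadd f m b0).repr * (((n:ℕ)-1 : ℕ) : Ordinal)) + ω ^ (ONote.oadd f m b0).repr := by
          have hz : (ONote.zero).repr = 0 := rfl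
          rw [repr_oadd', hz, add_zero, hko, mul_add, mul_one]
        cases hpred : predO (ONote.oadd f m b0) with
        | some e' =>
          have hrE : (ONote.oadd f m b0).repr = e'.repr + 1 := predO_some_repr (ONote.oadd f m b0) hb.fst e' hpred
          have hfs : (fundSeq (ONote.oadd (ONote.oadd f m b0) n ONote.zero) 1).repr = (ω ^ (ONote.oadd f m b0).repr * (((n:ℕ)-1 : ℕ) : Ordinal)) + ω ^ e'.repr := by
            rw [fundSeq_some f m b0 n e' hpred]
            by_cases hn : (n:ℕ) = 1
            · have h0 : (((n:ℕ)-1 : ℕ) : Ordinal) = 0 := by rw [hn]; norm_num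
              have hz : (ONote.zero).repr = 0 := rfl
              rw [dif_pos hn, repr_oadd', hz, add_zero, h0, mul_zero, _root_.zero_add]
              norm_num
            · have hz : (ONote.zero).repr = 0 := rfl
              rw [dif_neg hn]; erw [repr_oadd' (ONote.oadd f m b0)]
              simp
          rcases lt_or_ge a.repr (ω ^ (ONote.oadd f m b0).repr * (((n:ℕ)-1 : ℕ) : Ordinal)) with hap | hap
          · right; left
            rw [hfs]
            exact hap.trans_le (le_self_add)
          · right; right
            have hδeq : (ω ^ (ONote.oadd f m b0).repr * (((n:ℕ)-1 : ℕ) : Ordinal)) + (a.repr - (ω ^ (ONote.oadd f m b0).repr * (((n:ℕ)-1 : ℕ) : Ordinal))) = a.repr := Ordinal.add_sub_cancel_of_le hap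
            have hδlt : a.repr - (ω ^ (ONote.oadd f m b0).repr * (((n:ℕ)-1 : ℕ) : Ordinal)) < ω ^ (e'.repr + 1) := by
              have h4 : a.repr < (ω ^ (ONote.oadd f m b0).repr * (((n:ℕ)-1 : ℕ) : Ordinal)) + ω ^ (e'.repr + 1) := by
                rw [← hrE, ← hβ]; exact hab
              rw [← hδeq] at h4
              exact lt_of_add_lt_add_left h4
            obtain ⟨r, hr1, hr2⟩ := exists_nat_near _ _ hδlt
            refine ⟨.atHole (ω ^ (ONote.oadd f m b0).repr * (((n:ℕ)-1 : ℕ) : Ordinal)) ((a.repr - (ω ^ (ONote.oadd f m b0).repr * (((n:ℕ)-1 : ℕ) : Ordinal))) - ω ^ e'.repr * r), e'.repr, r, ?_, ?_, ?_⟩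
            · show a.repr = (ω ^ (ONote.oadd f m b0).repr * (((n:ℕ)-1 : ℕ) : Ordinal)) + ω ^ e'.repr * r + ((a.repr - (ω ^ (ONote.oadd f m b0).repr * (((n:ℕ)-1 : ℕ) : Ordinal))) - ω ^ e'.repr * r)
              rw [add_assoc, Ordinal.add_sub_cancel_of_le hr1, hδeq]
            · show (ONote.oadd (ONote.oadd f m b0) n ONote.zero).repr = (ω ^ (ONote.oadd f m b0).repr * (((n:ℕ)-1 : ℕ) : Ordinal)) + ω ^ (e'.repr + 1) + 0
              rw [add_zero, hβ, hrE]
            · show a.repr < (ω ^ (ONote.oadd f m b0).repr * (((n:ℕ)-1 : ℕ) : Ordinal)) + ω ^ e'.repr * ((r : Ordinal) + 1) + 0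
              rw [add_zero, ← hδeq]
              exact add_lt_add_right hr2 _
        | none =>
          have hlim : Order.IsSuccLimit (ONote.oadd f m b0).repr :=
            predO_none_limit (ONote.oadd f m b0) hb.fst hpred (by intro hc; cases hc)
          have hfs : (fundSeq (ONote.oadd (ONote.oadd f m b0) n ONote.zero) 1).repr
              = (ω ^ (ONote.oadd f m b0).repr * (((n:ℕ)-1 : ℕ) : Ordinal)) + ω ^ (fundSeq (ONote.oadd f m b0) 1).repr := by
            rw [fundSeq_none f m b0 n hpred]
            by_cases hn : (n:ℕ) = 1
            · have h0 : (((n:ℕ)-1 : ℕ) : Ordinal) = 0 := by rw [hn]; norm_num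
              have hz : (ONote.zero).repr = 0 := rfl
              rw [dif_pos hn, repr_oadd', hz, add_zero, h0, mul_zero, _root_.zero_add]
              norm_num
            · have hz : (ONote.zero).repr = 0 := rfl
              rw [dif_neg hn]; erw [repr_oadd' (ONote.oadd f m b0)]
              simp
          cases a with
          | zero =>
            right; left
            rw [hfs]
            have h1 : (0:Ordinal) < ω ^ (fundSeq (ONote.oadd f m b0) 1).repr := opow_pos _ omega0_pos
            have h2 : (ONote.zero).repr = 0 := rfl
            rw [h2]
            exact h1.trans_le (le_add_self)
          | oadd ea na a0 =>
            rcases lt_trichotomy ea.repr (ONote.oadd f m b0).repr with hE | hE | hE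
            · by_cases hn : (n:ℕ) = 1
              · -- p = 0 : core construction with d = a itself
                have hp0 : (ω ^ (ONote.oadd f m b0).repr * (((n:ℕ)-1 : ℕ) : Ordinal)) = 0 := by
                  rw [hn]; norm_num
                have hα : (ONote.oadd ea na a0).repr = (ω ^ (ONote.oadd f m b0).repr * (((n:ℕ)-1 : ℕ) : Ordinal)) + (ONote.oadd ea na a0).repr := by
                  rw [hp0, _root_.zero_add]
                have hIH : Goal ea (ONote.oadd f m b0) := IHe ea ha.fst hb.fst hE
                rcases core_limit (ONote.oadd f m b0) ea na a0 ha hlim (ω ^ (ONote.oadd f m b0).repr * (((n:ℕ)-1 : ℕ) : Ordinal)) hIH with h | ⟨c, γ, r, h1, h2, h3⟩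
                · right; left; rw [hfs, hα]; exact h
                · right; right
                  exact ⟨c, γ, r, by rw [hα]; exact h1, by rw [hβ]; exact h2,
                    by rw [hα]; exact h3⟩
              · -- n > 1 : α < ω^E ≤ p
                right; left
                rw [hfs]
                have h1 : (ONote.oadd ea na a0).repr < ω ^ (ONote.oadd f m b0).repr :=
                  (ONote.NF.below_of_lt hE ha).repr_lt
                have h2 : ω ^ (ONote.oadd f m b0).repr  ≤ (ω ^ (ONote.oadd f m b0).repr * (((n:ℕ)-1 : ℕ) : Ordinal)) := by
                                    calc ω ^ (ONote.oadd f m b0).repr = ω ^ (ONote.oadd f m b0).repr * 1 := (mul_one _).symm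
                    _ ≤ _ := by
                        apply mul_le_mul_right
                        have h3 : (1:ℕ) ≤ (n:ℕ) - 1 := by have h9 : 0 < (n:ℕ) := n.2; omega
                        exact_mod_cast h3
                exact h1.trans_le (h2.trans (le_self_add))
            · rcases lt_trichotomy (na:ℕ) ((n:ℕ) - 1) with hN | hN | hN
              · -- α < ω^E*(na+1) ≤ p
                right; left
                rw [hfs, repr_oadd']
                have hρ : a0.repr < ω ^ ea.repr := ha.snd'.repr_lt
                calc ω ^ ea.repr * ((na:ℕ) : Ordinal) + a0.repr
                    < ω ^ ea.repr * ((na:ℕ) : Ordinal) + ω ^ ea.repr := add_lt_add_right hρ _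
                  _ = ω ^ ea.repr * (((na:ℕ) : Ordinal) + 1) := by rw [mul_add, mul_one]
                  _  ≤ (ω ^ (ONote.oadd f m b0).repr * (((n:ℕ)-1 : ℕ) : Ordinal)) := by
                      rw [hE]
                      apply mul_le_mul_right
                      have h3 : ((na:ℕ) + 1 : ℕ) ≤ (n:ℕ) - 1 := hN
                      exact_mod_cast h3
                  _ ≤ _ := le_self_add
              · -- na = n - 1
                have hNo : ((na:ℕ) : Ordinal) = (((n:ℕ)-1 : ℕ) : Ordinal) := by
                  exact_mod_cast hN
                have hα : (ONote.oadd ea na a0).repr = (ω ^ (ONote.oadd f m b0).repr * (((n:ℕ)-1 : ℕ) : Ordinal)) + a0.repr := by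
                  rw [repr_oadd', hE, hNo]
                cases a0 with
                | zero =>
                  right; left
                  rw [hfs, hα]
                  have h1 : (0:Ordinal) < ω ^ (fundSeq (ONote.oadd f m b0) 1).repr := opow_pos _ omega0_pos
                  have h2 : (ONote.zero).repr = 0 := rfl
                  rw [h2]
                  exact add_lt_add_right h1 _
                | oadd f2 m2 ρ2 =>
                  have hf2 : f2.repr < (ONote.oadd f m b0).repr := by
                    rw [← hE]; exact ha.snd'.lt
                  have hIH : Goal f2 (ONote.oadd f m b0) := IHe f2 ha.snd.fst hb.fst hf2
                  rcases core_limit (ONote.oadd f m b0) f2 m2 ρ2 ha.snd hlim (ω ^ (ONote.oadd f m b0).repr * (((n:ℕ)-1 : ℕ) : Ordinal)) hIH with h | ⟨c, γ, r, h1, h2, h3⟩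
                  · right; left; rw [hfs, hα]; exact h
                  · right; right
                    exact ⟨c, γ, r, by rw [hα]; exact h1, by rw [hβ]; exact h2,
                      by rw [hα]; exact h3⟩
              · -- na ≥ n : contradiction
                exfalso
                have h1 : (ONote.oadd (ONote.oadd f m b0) n ONote.zero).repr ≤ (ONote.oadd ea na a0).repr := by
                  rw [repr_oadd' (ONote.oadd f m b0) n, repr_oadd' ea na, hE]
                  have h2 : (ONote.zero).repr = 0 := rfl
                  rw [h2, add_zero]
                  calc ω ^ (ONote.oadd f m b0).repr * ((n:ℕ) : Ordinal) ≤ ω ^ (ONote.oadd f m b0).repr * ((na:ℕ) : Ordinal) := by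
                        apply mul_le_mul_right
                        have h3 : (n:ℕ) ≤ (na:ℕ) := by have h9 : 0 < (n:ℕ) := n.2; omega
                        exact_mod_cast h3
                    _ ≤ _ := le_self_add
                exact absurd hab (not_lt_of_ge h1)
            · -- ea > E : contradiction
              exfalso
              have h1 : (ONote.oadd (ONote.oadd f m b0) n ONote.zero).repr < (ONote.oadd ea na a0).repr := by
                rw [repr_oadd' (ONote.oadd f m b0) n, repr_oadd' ea na]
                have h2 : (ONote.zero).repr = 0 := rfl
                rw [h2, add_zero]
                calc ω ^ (ONote.oadd f m b0).repr * ((n:ℕ) : Ordinal) < ω ^ ea.repr :=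
                      omega0_opow_mul_nat_lt hE (n:ℕ)
                  _ ≤ ω ^ ea.repr * ((na:ℕ) : Ordinal) := by
                      calc ω ^ ea.repr = ω ^ ea.repr * 1 := (mul_one _).symm
                        _ ≤ _ := by apply mul_le_mul_right; exact_mod_cast na.one_le
                  _ ≤ _ := le_self_add
              exact absurd hab (not_lt_of_ge h1.le)

/-- If `α < β` (below `ε₀`), then either `β = α + 1`, or `α < β[1]`, or there
are a context `λ`, an ordinal `γ` and a natural number `r` with
`α = λ[[ω^γ·r]]` and `β = λ*[[ω^{γ+1}]]`; moreover then `α < λ*[[ω^γ·(r+1)]]`. -/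
theorem context_trichotomy (a b : ONote) (ha : a.NF) (hb : b.NF)
    (hab : a.repr < b.repr) :
    b.repr = a.repr + 1 ∨ a.repr < (fundSeq b 1).repr ∨
    ∃ (c : Ctx) (γ : Ordinal) (r : ℕ),
      a.repr = c.subst (Ordinal.omega0 ^ γ * r) ∧
      b.repr = c.trunc.subst (Ordinal.omega0 ^ (γ + 1)) ∧
      a.repr < c.trunc.subst (Ordinal.omega0 ^ γ * (r + 1)) := by
  exact aux_main b a ha hb hab
end
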